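/- Let (X, U) with X ∈ ℂ^{ℓ×ℓ}, U ∈ ℂ^{ℓ×n} be a left invariant pair of the quadratic matrix polynomial P(z) = P0 + P1·z + P2·z², and let S(z) = S0 + S1·z with S0, S1 ∈ ℂ^{n×n}. Write P(z)·S(z) = T0 + T1·z + T2·z² + T3·z³, so T0 = P0·S0, T1 = P0·S1 + P1·S0, T2 = P1·S1 + P2·S0, T3 = P2·S1. Then U·T0 + X·U·T1 + X²·U·T2 + X³·U·T3 = 0 and the ℓ×3n matrix [U, X·U, X²·U] has full row rank ℓ; i.e., (X, U) is a left invariant pair of the cubic matrix polynomial P(z)·S(z). -/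

import Mathlib

open Matrix

lemma rank_le_rank_fromColumns {m n₁ n₂ : ℕ} (A : Matrix (Fin m) (Fin n₁) ℂ)
    (B : Matrix (Fin m) (Fin n₂) ℂ) : A.rank ≤ (fromCols A B).rank := by
  apply Submodule.finrank_mono
  rintro y ⟨x, rfl⟩
  exact ⟨Sum.elim x 0, by simp⟩

/-- If `(X, U)` is a left invariant pair of the quadratic matrix polynomial
`P(z) = P0 + P1 z + P2 z²` and `S(z) = S0 + S1 z`, then `(X, U)` is a left invariant pair
of the cubic matrix polynomial `P(z)·S(z) = T0 + T1 z + T2 z² + T3 z³`. -/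
theorem left_invariant_pair_mul_linear {n ℓ : ℕ}
    (P0 P1 P2 S0 S1 : Matrix (Fin n) (Fin n) ℂ)
    (X : Matrix (Fin ℓ) (Fin ℓ) ℂ) (U : Matrix (Fin ℓ) (Fin n) ℂ)
    (heq : U * P0 + X * U * P1 + X ^ 2 * U * P2 = 0)
    (hrank : (Matrix.fromCols U (X * U)).rank = ℓ)
    (T0 T1 T2 T3 : Matrix (Fin n) (Fin n) ℂ)
    (hT0 : T0 = P0 * S0) (hT1 : T1 = P0 * S1 + P1 * S0)
    (hT2 : T2 = P1 * S1 + P2 * S0) (hT3 : T3 = P2 * S1) :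
    U * T0 + X * U * T1 + X ^ 2 * U * T2 + X ^ 3 * U * T3 = 0 ∧
      (Matrix.fromCols U (Matrix.fromCols (X * U) (X ^ 2 * U))).rank = ℓ := by
  constructor
  · have key : U * T0 + X * U * T1 + X ^ 2 * U * T2 + X ^ 3 * U * T3 =
        (U * P0 + X * U * P1 + X ^ 2 * U * P2) * S0 +
          X * ((U * P0 + X * U * P1 + X ^ 2 * U * P2) * S1) := by
      subst hT0 hT1 hT2 hT3
      simp only [Matrix.mul_add, Matrix.add_mul, Matrix.mul_assoc, pow_succ, pow_zero, Matrix.one_mul]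
      abel
    rw [key, heq]
    simp
  · refine le_antisymm ((fromCols U _).rank_le_card_height.trans (by simp)) ?_
    calc ℓ = (fromCols U (X * U)).rank := hrank.symm
      _ ≤ _ := by
          apply Submodule.finrank_mono
          rintro y ⟨x, rfl⟩
          simp only [mulVecLin_apply]
          refine ⟨Sum.elim (x ∘ Sum.inl) (Sum.elim (x ∘ Sum.inr) 0), ?_⟩
          have : x = Sum.elim (x ∘ Sum.inl) (x ∘ Sum.inr) := by
            ext (i | i) <;> rfl
          simp only [mulVecLin_apply, fromCols_mulVec_sumElim, mulVec_zero, add_zero]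
          conv_rhs => rw [this]
          rw [fromCols_mulVec_sumElim]
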